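/- (Double robustness of the estimating function for (γ,η), case 𝓜₃: correct data-source propensity, arbitrary treatment propensity model.) Suppose E(Y | Z, X, R=1) = 𝓗(X)·τ(Z,X) + ω(X) a.s. for measurable functions 𝓗, ω, and P(D=1 | Z,X,R=0) = τ(Z,X) a.s. (propensity score equality). Let τ̄ : {0,1}×𝒳 → ℝ be an arbitrary measurable function. Then for every measurable function G : 𝒳×{0,1} → ℝ^k such that the integrand is integrable, E[ G(X,Z) · { R·[Y − 𝓗(X)·τ̄(Z,X) − ω(X)] − (1−R)·(π(Z,X)/(1−π(Z,X)))·𝓗(X)·[D − τ̄(Z,X)] } ] = 0. -/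

import Mathlib

open MeasureTheory ProbabilityTheory Filter Topology

section stmt14helpers

lemma stmt14_bdd_integrable {Ω : Type*} [MeasurableSpace Ω] (μ : Measure Ω) [IsFiniteMeasure μ]
    {u : Ω → ℝ} (hu : AEStronglyMeasurable u μ) (c : ℝ) (hb : ∀ ω, |u ω| ≤ c) :
    Integrable u μ :=
  Integrable.mono' (integrable_const c) hu (Eventually.of_forall fun ω => by simpa using hb ω)

lemma stmt14_key_swap {Ω : Type*} {m m0 : MeasurableSpace Ω} (hm : m ≤ m0)
    (μ : Measure Ω) [IsProbabilityMeasure μ] {f₀ f₁ v : Ω → ℝ}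
    (hf₀ : Integrable f₀ μ) (hcond : μ[f₀|m] =ᵐ[μ] f₁)
    (hv : StronglyMeasurable[m] v) (c : ℝ) (hb : ∀ ω, |v ω| ≤ c) :
    ∫ ω, v ω * f₀ ω ∂μ = ∫ ω, v ω * f₁ ω ∂μ := by
  have h1 : μ[v * f₀|m] =ᵐ[μ] v * μ[f₀|m] :=
    condExp_stronglyMeasurable_mul_of_bound hm hv hf₀ c
      (Eventually.of_forall fun ω => by simpa using hb ω)
  have h2 : ∫ ω, (v * f₀) ω ∂μ = ∫ ω, (μ[v * f₀|m]) ω ∂μ := (integral_condExp hm).symm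
  calc ∫ ω, v ω * f₀ ω ∂μ = ∫ ω, (μ[v * f₀|m]) ω ∂μ := h2
    _ = ∫ ω, v ω * f₁ ω ∂μ := by
        refine integral_congr_ae (h1.trans ?_)
        filter_upwards [hcond] with ω h
        simp [h]

lemma stmt14_cond_integral {Ω : Type*} [MeasurableSpace Ω] (μ : Measure Ω) [IsFiniteMeasure μ]
    {s : Set Ω} (hne : μ s ≠ 0) (u : Ω → ℝ) :
    ∫ ω in s, u ω ∂μ = (μ s).toReal * ∫ ω, u ω ∂μ[|s] := by
  rw [ProbabilityTheory.cond, integral_smul_measure, ENNReal.toReal_inv, smul_eq_mul,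
    ← mul_assoc, mul_inv_cancel₀ (by simp [ENNReal.toReal_ne_zero, hne, measure_ne_top]), one_mul]

end stmt14helpers

/-- Double robustness of the (γ,η) estimating function, case 𝓜₃:
correct data-source propensity `π` and outcome decomposition, arbitrary treatment propensity
working model `τ̄ : {0,1}×𝒳 → ℝ`. Then for every measurable `G : 𝒳×{0,1} → ℝ^k` with
integrable integrand,
`E[ G(X,Z)·{ R·[Y − 𝓗(X)τ̄(Z,X) − ω(X)] − (1−R)·(π(Z,X)/(1−π(Z,X)))·𝓗(X)·[D − τ̄(Z,X)] } ] = 0`. -/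
theorem stmt_14
    {Ω 𝒳 : Type*} [MeasurableSpace Ω] [MeasurableSpace 𝒳] [StandardBorelSpace 𝒳]
    (P : Measure Ω) [IsProbabilityMeasure P]
    (R Z D : Ω → Bool) (X : Ω → 𝒳) (Y : Ω → ℝ)
    (hR : Measurable R) (hZ : Measurable Z) (hD : Measurable D)
    (hX : Measurable X) (hY : Measurable Y) (hYint : Integrable Y P)
    -- τ(z,x) := P(D=1 | Z=z, X=x, R=1)
    (tau : Bool → 𝒳 → ℝ) (htau_meas : Measurable fun p : Bool × 𝒳 => tau p.1 p.2)
    (htau_ver : (fun ω => tau (Z ω) (X ω)) =ᵐ[P[|{ω | R ω = true}]]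
      (P[|{ω | R ω = true}])[(fun ω => if D ω then (1:ℝ) else 0) |
        MeasurableSpace.comap (fun ω => (Z ω, X ω)) inferInstance])
    -- π(z,x) := P(R=1 | Z=z, X=x), with 0 < π(Z,X) < 1 a.s.
    (pi : Bool → 𝒳 → ℝ) (hpi_meas : Measurable fun p : Bool × 𝒳 => pi p.1 p.2)
    (hpi_ver : (fun ω => pi (Z ω) (X ω)) =ᵐ[P]
      P[(fun ω => if R ω then (1:ℝ) else 0) |
        MeasurableSpace.comap (fun ω => (Z ω, X ω)) inferInstance])
    (hpi_pos : ∀ᵐ ω ∂P, 0 < pi (Z ω) (X ω) ∧ pi (Z ω) (X ω) < 1)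
    -- outcome decomposition: E(Y | Z, X, R=1) = 𝓗(X)·τ(Z,X) + ω(X) a.s.
    (Hfun wfun : 𝒳 → ℝ) (hHfun_meas : Measurable Hfun) (hwfun_meas : Measurable wfun)
    (hout : (P[|{ω | R ω = true}])[Y |
        MeasurableSpace.comap (fun ω => (Z ω, X ω)) inferInstance]
      =ᵐ[P[|{ω | R ω = true}]]
        fun ω => Hfun (X ω) * tau (Z ω) (X ω) + wfun (X ω))
    -- propensity score equality: P(D=1 | Z, X, R=0) = τ(Z,X) a.s.
    (hpse : (fun ω => tau (Z ω) (X ω)) =ᵐ[P[|{ω | R ω = false}]]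
      (P[|{ω | R ω = false}])[(fun ω => if D ω then (1:ℝ) else 0) |
        MeasurableSpace.comap (fun ω => (Z ω, X ω)) inferInstance])
    -- arbitrary measurable working model τ̄ : {0,1}×𝒳 → ℝ
    (taubar : Bool → 𝒳 → ℝ) (htaubar_meas : Measurable fun p : Bool × 𝒳 => taubar p.1 p.2)
    -- arbitrary measurable G : 𝒳×{0,1} → ℝ^k with integrable integrand
    (k : ℕ) (G : 𝒳 × Bool → EuclideanSpace ℝ (Fin k)) (hG : Measurable G)
    (hint : Integrable (fun ω =>
        ((if R ω then (1:ℝ) else 0) *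
            (Y ω - Hfun (X ω) * taubar (Z ω) (X ω) - wfun (X ω)) -
          (if R ω then (0:ℝ) else 1) * (pi (Z ω) (X ω) / (1 - pi (Z ω) (X ω))) *
            Hfun (X ω) * ((if D ω then (1:ℝ) else 0) - taubar (Z ω) (X ω))) • G (X ω, Z ω)) P) :
    ∫ ω, ((if R ω then (1:ℝ) else 0) *
            (Y ω - Hfun (X ω) * taubar (Z ω) (X ω) - wfun (X ω)) -
          (if R ω then (0:ℝ) else 1) * (pi (Z ω) (X ω) / (1 - pi (Z ω) (X ω))) *
            Hfun (X ω) * ((if D ω then (1:ℝ) else 0) - taubar (Z ω) (X ω))) • G (X ω, Z ω) ∂P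
      = 0 := by
  classical
  have hWmeas : Measurable fun ω => (Z ω, X ω) := hZ.prodMk hX
  suffices key0 : ∀ g : Bool × 𝒳 → ℝ, Measurable g →
      Integrable (fun ω => ((if R ω then (1:ℝ) else 0) * (Y ω - Hfun (X ω) * taubar (Z ω) (X ω) - wfun (X ω)) - (if R ω then (0:ℝ) else 1) * (pi (Z ω) (X ω) / (1 - pi (Z ω) (X ω))) * Hfun (X ω) * ((if D ω then (1:ℝ) else 0) - taubar (Z ω) (X ω))) * g (Z ω, X ω)) P →
      ∫ ω, ((if R ω then (1:ℝ) else 0) * (Y ω - Hfun (X ω) * taubar (Z ω) (X ω) - wfun (X ω)) - (if R ω then (0:ℝ) else 1) * (pi (Z ω) (X ω) / (1 - pi (Z ω) (X ω))) * Hfun (X ω) * ((if D ω then (1:ℝ) else 0) - taubar (Z ω) (X ω))) * g (Z ω, X ω) ∂P = 0 by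
    ext i
    have hL := (EuclideanSpace.proj (𝕜 := ℝ) i).integral_comp_comm hint
    have hrw : (fun ω => (EuclideanSpace.proj (𝕜 := ℝ) i) (((if R ω then (1:ℝ) else 0) * (Y ω - Hfun (X ω) * taubar (Z ω) (X ω) - wfun (X ω)) - (if R ω then (0:ℝ) else 1) * (pi (Z ω) (X ω) / (1 - pi (Z ω) (X ω))) * Hfun (X ω) * ((if D ω then (1:ℝ) else 0) - taubar (Z ω) (X ω))) • G (X ω, Z ω)))
        = fun ω => ((if R ω then (1:ℝ) else 0) * (Y ω - Hfun (X ω) * taubar (Z ω) (X ω) - wfun (X ω)) - (if R ω then (0:ℝ) else 1) * (pi (Z ω) (X ω) / (1 - pi (Z ω) (X ω))) * Hfun (X ω) * ((if D ω then (1:ℝ) else 0) - taubar (Z ω) (X ω))) * G (X ω, Z ω) i := by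
      funext ω; simp [smul_eq_mul]
    rw [hrw] at hL
    have hintg : Integrable (fun ω => ((if R ω then (1:ℝ) else 0) * (Y ω - Hfun (X ω) * taubar (Z ω) (X ω) - wfun (X ω)) - (if R ω then (0:ℝ) else 1) * (pi (Z ω) (X ω) / (1 - pi (Z ω) (X ω))) * Hfun (X ω) * ((if D ω then (1:ℝ) else 0) - taubar (Z ω) (X ω))) * G (X ω, Z ω) i) P := by
      have h := (EuclideanSpace.proj (𝕜 := ℝ) i).integrable_comp hint
      exact hrw ▸ h
    have h0 := key0 (fun p => G (p.2, p.1) i)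
      (((EuclideanSpace.proj (𝕜 := ℝ) i).continuous.measurable.comp hG).comp measurable_swap)
      hintg
    calc (∫ ω, ((if R ω then (1:ℝ) else 0) * (Y ω - Hfun (X ω) * taubar (Z ω) (X ω) - wfun (X ω)) -
          (if R ω then (0:ℝ) else 1) * (pi (Z ω) (X ω) / (1 - pi (Z ω) (X ω))) * Hfun (X ω) *
            ((if D ω then (1:ℝ) else 0) - taubar (Z ω) (X ω))) • G (X ω, Z ω) ∂P) i
        = ∫ ω, ((if R ω then (1:ℝ) else 0) * (Y ω - Hfun (X ω) * taubar (Z ω) (X ω) - wfun (X ω)) -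
          (if R ω then (0:ℝ) else 1) * (pi (Z ω) (X ω) / (1 - pi (Z ω) (X ω))) * Hfun (X ω) *
            ((if D ω then (1:ℝ) else 0) - taubar (Z ω) (X ω))) * G (X ω, Z ω) i ∂P := hL.symm
      _ = 0 := h0
  intro g hg hfg
  have hm : (MeasurableSpace.comap (fun ω => (Z ω, X ω)) inferInstance) ≤ (inferInstance : MeasurableSpace Ω) := hWmeas.comap_le
  have hWm : Measurable[(MeasurableSpace.comap (fun ω => (Z ω, X ω)) inferInstance)] fun ω => (Z ω, X ω) := comap_measurable _
  have hvm : ∀ {u : Bool × 𝒳 → ℝ}, Measurable u →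
      StronglyMeasurable[(MeasurableSpace.comap (fun ω => (Z ω, X ω)) inferInstance)] fun ω => u (Z ω, X ω) :=
    fun hu => (hu.comp hWm).stronglyMeasurable
  have hs1 : MeasurableSet {ω | R ω = true} := hR (measurableSet_singleton true)
  have hs0 : MeasurableSet {ω | R ω = false} := hR (measurableSet_singleton false)
  have h1R : Measurable fun ω => (if R ω then (1:ℝ) else 0) :=
    Measurable.ite hs1 measurable_const measurable_const
  have h0R : Measurable fun ω => (if R ω then (0:ℝ) else 1) :=
    Measurable.ite hs1 measurable_const measurable_const
  have hD1 : Measurable fun ω => (if D ω then (1:ℝ) else 0) :=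
    Measurable.ite (hD (measurableSet_singleton true)) measurable_const measurable_const
  haveI : (ae P).NeBot := ae_neBot.mpr (IsProbabilityMeasure.ne_zero P)
  have c1ne : P {ω | R ω = true} ≠ 0 := by
    intro h0
    have haeR : ∀ᵐ ω ∂P, ¬ (R ω = true) := by
      rw [ae_iff]; simpa using h0
    have h1 : (fun ω => if R ω then (1:ℝ) else 0) =ᵐ[P] (fun _ => (0:ℝ)) := by
      filter_upwards [haeR] with ω h; simp [h]
    have h2 : P[(fun ω => if R ω then (1:ℝ) else 0)|(MeasurableSpace.comap (fun ω => (Z ω, X ω)) inferInstance)] =ᵐ[P] (fun _ => (0:ℝ)) := by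
      refine (condExp_congr_ae h1).trans ?_
      rw [condExp_const hm]
    obtain ⟨ω, ⟨hlt, _⟩, he⟩ := (hpi_pos.and (hpi_ver.trans h2)).exists
    simp only at he
    rw [he] at hlt; exact lt_irrefl _ hlt
  have c0ne : P {ω | R ω = false} ≠ 0 := by
    intro h0
    have haeR : ∀ᵐ ω ∂P, ¬ (R ω = false) := by
      rw [ae_iff]; simpa using h0
    have h1 : (fun ω => if R ω then (1:ℝ) else 0) =ᵐ[P] (fun _ => (1:ℝ)) := by
      filter_upwards [haeR] with ω h
      simp only [Bool.not_eq_false] at h; simp [h]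
    have h2 : P[(fun ω => if R ω then (1:ℝ) else 0)|(MeasurableSpace.comap (fun ω => (Z ω, X ω)) inferInstance)] =ᵐ[P] (fun _ => (1:ℝ)) := by
      refine (condExp_congr_ae h1).trans ?_
      rw [condExp_const hm]
    obtain ⟨ω, ⟨_, hlt⟩, he⟩ := (hpi_pos.and (hpi_ver.trans h2)).exists
    simp only at he
    rw [he] at hlt; exact lt_irrefl _ hlt
  haveI i1 : IsProbabilityMeasure (P[|{ω | R ω = true}]) := cond_isProbabilityMeasure c1ne
  haveI i0 : IsProbabilityMeasure (P[|{ω | R ω = false}]) := cond_isProbabilityMeasure c0ne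
  have condIntble : ∀ (s : Set Ω), P s ≠ 0 → ∀ {u : Ω → ℝ}, Integrable u P →
      Integrable u (P[|s]) := by
    intro s hne u hu
    rw [ProbabilityTheory.cond]
    exact (hu.restrict).smul_measure (ENNReal.inv_ne_top.mpr hne)
  have ind1 : ∀ u : Ω → ℝ, ∫ ω, (if R ω then (1:ℝ) else 0) * u ω ∂P
      = (P {ω | R ω = true}).toReal * ∫ ω, u ω ∂(P[|{ω | R ω = true}]) := by
    intro u
    have hi : (fun ω => (if R ω then (1:ℝ) else 0) * u ω) = {ω | R ω = true}.indicator u := by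
      funext ω; by_cases h : R ω <;> simp [Set.indicator_apply, h]
    rw [hi, integral_indicator hs1, stmt14_cond_integral P c1ne]
  have ind0 : ∀ u : Ω → ℝ, ∫ ω, (if R ω then (0:ℝ) else 1) * u ω ∂P
      = (P {ω | R ω = false}).toReal * ∫ ω, u ω ∂(P[|{ω | R ω = false}]) := by
    intro u
    have hi : (fun ω => (if R ω then (0:ℝ) else 1) * u ω) = {ω | R ω = false}.indicator u := by
      funext ω; by_cases h : R ω <;> simp [Set.indicator_apply, h]
    rw [hi, integral_indicator hs0, stmt14_cond_integral P c0ne]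
  -- measurable building blocks on Bool × 𝒳
  have hH2 : Measurable fun p : Bool × 𝒳 => Hfun p.2 := hHfun_meas.comp measurable_snd
  have hw2 : Measurable fun p : Bool × 𝒳 => wfun p.2 := hwfun_meas.comp measurable_snd
  have hrp : Measurable fun p : Bool × 𝒳 => pi p.1 p.2 / (1 - pi p.1 p.2) :=
    hpi_meas.div (measurable_const.sub hpi_meas)
  have hgW : Measurable fun ω => g (Z ω, X ω) := hg.comp hWmeas
  set Mx : Bool × 𝒳 → ℝ := fun p =>
    max (max (max |g p| |Hfun p.2 * tau p.1 p.2 + wfun p.2|)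
             (max |Hfun p.2 * taubar p.1 p.2 + wfun p.2| |(pi p.1 p.2 / (1 - pi p.1 p.2)) * Hfun p.2|))
        (max (max |(pi p.1 p.2 / (1 - pi p.1 p.2)) * Hfun p.2 * taubar p.1 p.2| |(pi p.1 p.2 / (1 - pi p.1 p.2)) * Hfun p.2 * tau p.1 p.2|)
             |pi p.1 p.2 / (1 - pi p.1 p.2)|) with hMx_def
  have hMxmeas : Measurable Mx := by
    rw [hMx_def]
    exact ((hg.abs.max ((hH2.mul htau_meas).add hw2).abs).max
        ((((hH2.mul htaubar_meas).add hw2).abs).max ((hrp.mul hH2)).abs)).max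
      (((((hrp.mul hH2).mul htaubar_meas).abs).max (((hrp.mul hH2).mul htau_meas)).abs).max
        hrp.abs)
  set S : ℕ → Set (Bool × 𝒳) := fun n => {p | Mx p ≤ (n:ℝ)} with hS_def
  have hS : ∀ n, MeasurableSet (S n) := fun n => measurableSet_le hMxmeas measurable_const
  have hImeas : ∀ n : ℕ, Measurable ((S n).indicator (fun _ => (1:ℝ))) := fun n =>
    measurable_const.indicator (hS n)
  have hmemS : ∀ (n : ℕ) (p : Bool × 𝒳), p ∈ S n →
      |g p| ≤ (n:ℝ) ∧ |Hfun p.2 * tau p.1 p.2 + wfun p.2| ≤ (n:ℝ) ∧ |Hfun p.2 * taubar p.1 p.2 + wfun p.2| ≤ (n:ℝ) ∧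
      |(pi p.1 p.2 / (1 - pi p.1 p.2)) * Hfun p.2| ≤ (n:ℝ) ∧ |(pi p.1 p.2 / (1 - pi p.1 p.2)) * Hfun p.2 * taubar p.1 p.2| ≤ (n:ℝ) ∧
      |(pi p.1 p.2 / (1 - pi p.1 p.2)) * Hfun p.2 * tau p.1 p.2| ≤ (n:ℝ) ∧ |pi p.1 p.2 / (1 - pi p.1 p.2)| ≤ (n:ℝ) := by
    intro n p hp
    simp only [hS_def, Set.mem_setOf_eq, hMx_def, max_le_iff] at hp
    obtain ⟨⟨⟨h1, h2⟩, ⟨h3, h4⟩⟩, ⟨⟨h5, h6⟩, h7⟩⟩ := hp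
    exact ⟨h1, h2, h3, h4, h5, h6, h7⟩
  have hb_gen : ∀ (n : ℕ) (u : Bool × 𝒳 → ℝ) (c : ℝ), 0 ≤ c →
      (∀ p, p ∈ S n → |u p| ≤ c) →
      ∀ p, |u p * (S n).indicator (fun _ => (1:ℝ)) p| ≤ c := by
    intro n u c hc hu p
    by_cases hp : p ∈ S n
    · simpa [Set.indicator_of_mem hp] using hu p hp
    · simp [Set.indicator_of_notMem hp, hc]
  have hmul_le : ∀ (x y c d : ℝ), |x| ≤ c → |y| ≤ d → |x * y| ≤ c * d := by
    intro x y c d hx hy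
    rw [abs_mul]
    exact mul_le_mul hx hy (abs_nonneg _) ((abs_nonneg _).trans hx)
  have hfmeas : Measurable (fun ω => ((if R ω then (1:ℝ) else 0) * (Y ω - Hfun (X ω) * taubar (Z ω) (X ω) - wfun (X ω)) - (if R ω then (0:ℝ) else 1) * (pi (Z ω) (X ω) / (1 - pi (Z ω) (X ω))) * Hfun (X ω) * ((if D ω then (1:ℝ) else 0) - taubar (Z ω) (X ω)))) := by
    have htb : Measurable fun ω => taubar (Z ω) (X ω) := htaubar_meas.comp hWmeas
    have hpw : Measurable fun ω => pi (Z ω) (X ω) := hpi_meas.comp hWmeas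
    exact (h1R.mul ((hY.sub ((hHfun_meas.comp hX).mul htb)).sub (hwfun_meas.comp hX))).sub
      (((h0R.mul (hpw.div (measurable_const.sub hpw))).mul (hHfun_meas.comp hX)).mul
        (hD1.sub htb))
  have htbW : Measurable fun ω => taubar (Z ω) (X ω) := htaubar_meas.comp hWmeas
  have htaW : Measurable fun ω => tau (Z ω) (X ω) := htau_meas.comp hWmeas
  have hrW : Measurable fun ω => (pi (Z ω) (X ω) / (1 - pi (Z ω) (X ω))) := hrp.comp hWmeas
  have hHW : Measurable fun ω => Hfun (X ω) := hHfun_meas.comp hX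
  have hwW : Measurable fun ω => wfun (X ω) := hwfun_meas.comp hX
  have hiRint : Integrable (fun ω => (if R ω then (1:ℝ) else 0)) P :=
    stmt14_bdd_integrable P h1R.aestronglyMeasurable 1
      (fun ω => by by_cases h : R ω <;> simp [h])
  have hiDint : Integrable (fun ω => (if D ω then (1:ℝ) else 0)) P :=
    stmt14_bdd_integrable P hD1.aestronglyMeasurable 1
      (fun ω => by by_cases h : D ω <;> simp [h])
  have hQint : Integrable (fun ω => pi (Z ω) (X ω)) P :=
    integrable_condExp.congr hpi_ver.symm
  have hIRb : ∀ ω, |(if R ω then (1:ℝ) else 0)| ≤ 1 := fun ω => by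
    by_cases h : R ω <;> simp [h]
  have hINRb : ∀ ω, |(if R ω then (0:ℝ) else 1)| ≤ 1 := fun ω => by
    by_cases h : R ω <;> simp [h]
  have hIDb : ∀ ω, |(if D ω then (1:ℝ) else 0)| ≤ 1 := fun ω => by
    by_cases h : D ω <;> simp [h]
  have step2 : ∀ n : ℕ, ∫ ω, ((if R ω then (1:ℝ) else 0) * (Y ω - Hfun (X ω) * taubar (Z ω) (X ω) - wfun (X ω)) - (if R ω then (0:ℝ) else 1) * (pi (Z ω) (X ω) / (1 - pi (Z ω) (X ω))) * Hfun (X ω) * ((if D ω then (1:ℝ) else 0) - taubar (Z ω) (X ω))) * (g (Z ω, X ω) * (S n).indicator (fun _ => (1:ℝ)) (Z ω, X ω)) ∂P = 0 := by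
    intro n
    have hb1 : ∀ p, |g p * (S n).indicator (fun _ => (1:ℝ)) p| ≤ (n:ℝ) :=
      hb_gen n g _ (Nat.cast_nonneg n) (fun p hp => (hmemS n p hp).1)
    have hbA : ∀ p, |(g p * (Hfun p.2 * tau p.1 p.2 + wfun p.2)) * (S n).indicator (fun _ => (1:ℝ)) p| ≤ (n:ℝ) * n := by
      refine hb_gen n _ _ (by positivity) ?_
      intro p hp
      obtain ⟨h1, h2, h3, h4, h5, h6, h7⟩ := hmemS n p hp
      exact hmul_le _ _ _ _ h1 h2
    have hb2 : ∀ p, |(g p * (Hfun p.2 * taubar p.1 p.2 + wfun p.2)) * (S n).indicator (fun _ => (1:ℝ)) p| ≤ (n:ℝ) * n := by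
      refine hb_gen n _ _ (by positivity) ?_
      intro p hp
      obtain ⟨h1, h2, h3, h4, h5, h6, h7⟩ := hmemS n p hp
      exact hmul_le _ _ _ _ h1 h3
    have hb3 : ∀ p, |(g p * ((pi p.1 p.2 / (1 - pi p.1 p.2)) * Hfun p.2)) * (S n).indicator (fun _ => (1:ℝ)) p| ≤ (n:ℝ) * n := by
      refine hb_gen n _ _ (by positivity) ?_
      intro p hp
      obtain ⟨h1, h2, h3, h4, h5, h6, h7⟩ := hmemS n p hp
      exact hmul_le _ _ _ _ h1 h4
    have hb4 : ∀ p, |(g p * ((pi p.1 p.2 / (1 - pi p.1 p.2)) * Hfun p.2 * taubar p.1 p.2)) * (S n).indicator (fun _ => (1:ℝ)) p| ≤ (n:ℝ) * n := by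
      refine hb_gen n _ _ (by positivity) ?_
      intro p hp
      obtain ⟨h1, h2, h3, h4, h5, h6, h7⟩ := hmemS n p hp
      exact hmul_le _ _ _ _ h1 h5
    have hbF : ∀ p, |(g p * ((pi p.1 p.2 / (1 - pi p.1 p.2)) * Hfun p.2 * tau p.1 p.2)) * (S n).indicator (fun _ => (1:ℝ)) p| ≤ (n:ℝ) * n := by
      refine hb_gen n _ _ (by positivity) ?_
      intro p hp
      obtain ⟨h1, h2, h3, h4, h5, h6, h7⟩ := hmemS n p hp
      exact hmul_le _ _ _ _ h1 h6
    have hb5 : ∀ p, |(g p * ((Hfun p.2 * tau p.1 p.2 + wfun p.2) - (Hfun p.2 * taubar p.1 p.2 + wfun p.2))) * (S n).indicator (fun _ => (1:ℝ)) p| ≤ (n:ℝ) * ((n:ℝ) + (n:ℝ)) := by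
      refine hb_gen n _ _ (by positivity) ?_
      intro p hp
      obtain ⟨h1, h2, h3, h4, h5, h6, h7⟩ := hmemS n p hp
      exact hmul_le _ _ _ _ h1 ((abs_sub _ _).trans (add_le_add h2 h3))
    have hb6 : ∀ p, |(g p * ((pi p.1 p.2 / (1 - pi p.1 p.2)) * ((Hfun p.2 * tau p.1 p.2 + wfun p.2) - (Hfun p.2 * taubar p.1 p.2 + wfun p.2)))) * (S n).indicator (fun _ => (1:ℝ)) p| ≤ (n:ℝ) * ((n:ℝ) + (n:ℝ)) := by
      refine hb_gen n _ _ (by positivity) ?_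
      intro p hp
      obtain ⟨h1, h2, h3, h4, h5, h6, h7⟩ := hmemS n p hp
      have he : (pi p.1 p.2 / (1 - pi p.1 p.2)) * ((Hfun p.2 * tau p.1 p.2 + wfun p.2) - (Hfun p.2 * taubar p.1 p.2 + wfun p.2))
          = (pi p.1 p.2 / (1 - pi p.1 p.2)) * Hfun p.2 * tau p.1 p.2 - (pi p.1 p.2 / (1 - pi p.1 p.2)) * Hfun p.2 * taubar p.1 p.2 := by ring
      rw [he]
      exact hmul_le _ _ _ _ h1 ((abs_sub _ _).trans (add_le_add h6 h5))
    have hIW : Measurable fun ω => (S n).indicator (fun _ => (1:ℝ)) (Z ω, X ω) := (hImeas n).comp hWmeas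
    have hABm : Measurable fun p : Bool × 𝒳 =>
        ((Hfun p.2 * tau p.1 p.2 + wfun p.2)) - ((Hfun p.2 * taubar p.1 p.2 + wfun p.2)) :=
      ((hH2.mul htau_meas).add hw2).sub ((hH2.mul htaubar_meas).add hw2)
    have iT1 : Integrable (fun ω => (if R ω then (1:ℝ) else 0) * ((g (Z ω, X ω) * (S n).indicator (fun _ => (1:ℝ)) (Z ω, X ω)) * Y ω)) P := by
      have base : Integrable (fun ω => ((if R ω then (1:ℝ) else 0) * (g (Z ω, X ω) * (S n).indicator (fun _ => (1:ℝ)) (Z ω, X ω))) * Y ω) P :=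
        hYint.bdd_mul (c := (n:ℝ)) ((h1R.mul (hgW.mul hIW)).aestronglyMeasurable)
          (Eventually.of_forall fun ω => by
            rw [Real.norm_eq_abs]
            simpa using hmul_le _ _ 1 (n:ℝ) (hIRb ω) (hb1 (Z ω, X ω)))
      exact base.congr (Eventually.of_forall fun ω => by ring)
    have iT2 : Integrable (fun ω => (if R ω then (1:ℝ) else 0) * ((g (Z ω, X ω) * (Hfun (X ω) * taubar (Z ω) (X ω) + wfun (X ω))) * (S n).indicator (fun _ => (1:ℝ)) (Z ω, X ω))) P :=
      stmt14_bdd_integrable P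
        ((h1R.mul ((hgW.mul ((hHW.mul htbW).add hwW)).mul hIW)).aestronglyMeasurable)
        (1 * ((n:ℝ) * n))
        (fun ω => hmul_le _ _ _ _ (hIRb ω) (hb2 (Z ω, X ω)))
    have iT3 : Integrable (fun ω => (if R ω then (0:ℝ) else 1) * (((g (Z ω, X ω) * ((pi (Z ω) (X ω) / (1 - pi (Z ω) (X ω))) * Hfun (X ω))) * (S n).indicator (fun _ => (1:ℝ)) (Z ω, X ω)) * (if D ω then (1:ℝ) else 0))) P :=
      stmt14_bdd_integrable P
        ((h0R.mul (((hgW.mul (hrW.mul hHW)).mul hIW).mul hD1)).aestronglyMeasurable)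
        (1 * (((n:ℝ) * n) * 1))
        (fun ω => hmul_le _ _ _ _ (hINRb ω)
          (hmul_le _ _ _ _ (hb3 (Z ω, X ω)) (hIDb ω)))
    have iT4 : Integrable (fun ω => (if R ω then (0:ℝ) else 1) * ((g (Z ω, X ω) * ((pi (Z ω) (X ω) / (1 - pi (Z ω) (X ω))) * Hfun (X ω) * taubar (Z ω) (X ω))) * (S n).indicator (fun _ => (1:ℝ)) (Z ω, X ω))) P :=
      stmt14_bdd_integrable P
        ((h0R.mul ((hgW.mul ((hrW.mul hHW).mul htbW)).mul hIW)).aestronglyMeasurable)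
        (1 * ((n:ℝ) * n))
        (fun ω => hmul_le _ _ _ _ (hINRb ω) (hb4 (Z ω, X ω)))
    have iTA : Integrable (fun ω => (if R ω then (1:ℝ) else 0) * ((g (Z ω, X ω) * (Hfun (X ω) * tau (Z ω) (X ω) + wfun (X ω))) * (S n).indicator (fun _ => (1:ℝ)) (Z ω, X ω))) P :=
      stmt14_bdd_integrable P
        ((h1R.mul ((hgW.mul ((hHW.mul htaW).add hwW)).mul hIW)).aestronglyMeasurable)
        (1 * ((n:ℝ) * n))
        (fun ω => hmul_le _ _ _ _ (hIRb ω) (hbA (Z ω, X ω)))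
    have iTF : Integrable (fun ω => (if R ω then (0:ℝ) else 1) * ((g (Z ω, X ω) * ((pi (Z ω) (X ω) / (1 - pi (Z ω) (X ω))) * Hfun (X ω) * tau (Z ω) (X ω))) * (S n).indicator (fun _ => (1:ℝ)) (Z ω, X ω))) P :=
      stmt14_bdd_integrable P
        ((h0R.mul ((hgW.mul ((hrW.mul hHW).mul htaW)).mul hIW)).aestronglyMeasurable)
        (1 * ((n:ℝ) * n))
        (fun ω => hmul_le _ _ _ _ (hINRb ω) (hbF (Z ω, X ω)))
    have hv1meas : Measurable fun ω => (g (Z ω, X ω) * ((Hfun (X ω) * tau (Z ω) (X ω) + wfun (X ω)) - (Hfun (X ω) * taubar (Z ω) (X ω) + wfun (X ω)))) * (S n).indicator (fun _ => (1:ℝ)) (Z ω, X ω) :=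
      (hgW.mul ((hABm.comp hWmeas))).mul hIW
    have hv2meas : Measurable fun ω => (g (Z ω, X ω) * ((pi (Z ω) (X ω) / (1 - pi (Z ω) (X ω))) * ((Hfun (X ω) * tau (Z ω) (X ω) + wfun (X ω)) - (Hfun (X ω) * taubar (Z ω) (X ω) + wfun (X ω))))) * (S n).indicator (fun _ => (1:ℝ)) (Z ω, X ω) :=
      (hgW.mul (hrW.mul (hABm.comp hWmeas))).mul hIW
    have iv2 : Integrable (fun ω => (g (Z ω, X ω) * ((pi (Z ω) (X ω) / (1 - pi (Z ω) (X ω))) * ((Hfun (X ω) * tau (Z ω) (X ω) + wfun (X ω)) - (Hfun (X ω) * taubar (Z ω) (X ω) + wfun (X ω))))) * (S n).indicator (fun _ => (1:ℝ)) (Z ω, X ω)) P :=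
      stmt14_bdd_integrable P hv2meas.aestronglyMeasurable _
        (fun ω => hb6 (Z ω, X ω))
    have iv2R : Integrable (fun ω => ((g (Z ω, X ω) * ((pi (Z ω) (X ω) / (1 - pi (Z ω) (X ω))) * ((Hfun (X ω) * tau (Z ω) (X ω) + wfun (X ω)) - (Hfun (X ω) * taubar (Z ω) (X ω) + wfun (X ω))))) * (S n).indicator (fun _ => (1:ℝ)) (Z ω, X ω)) * (if R ω then (1:ℝ) else 0)) P :=
      stmt14_bdd_integrable P (hv2meas.mul h1R).aestronglyMeasurable
        (((n:ℝ) * ((n:ℝ) + (n:ℝ))) * 1)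
        (fun ω => hmul_le _ _ _ _ (hb6 (Z ω, X ω)) (hIRb ω))
    have iv1pi : Integrable (fun ω => ((g (Z ω, X ω) * ((Hfun (X ω) * tau (Z ω) (X ω) + wfun (X ω)) - (Hfun (X ω) * taubar (Z ω) (X ω) + wfun (X ω)))) * (S n).indicator (fun _ => (1:ℝ)) (Z ω, X ω)) * pi (Z ω) (X ω)) P :=
      hQint.bdd_mul (c := (n:ℝ) * ((n:ℝ) + (n:ℝ))) hv1meas.aestronglyMeasurable
        (Eventually.of_forall fun ω => by
          rw [Real.norm_eq_abs]; exact hb5 (Z ω, X ω))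
    have iv2pi : Integrable (fun ω => ((g (Z ω, X ω) * ((pi (Z ω) (X ω) / (1 - pi (Z ω) (X ω))) * ((Hfun (X ω) * tau (Z ω) (X ω) + wfun (X ω)) - (Hfun (X ω) * taubar (Z ω) (X ω) + wfun (X ω))))) * (S n).indicator (fun _ => (1:ℝ)) (Z ω, X ω)) * pi (Z ω) (X ω)) P :=
      hQint.bdd_mul (c := (n:ℝ) * ((n:ℝ) + (n:ℝ))) hv2meas.aestronglyMeasurable
        (Eventually.of_forall fun ω => by
          rw [Real.norm_eq_abs]; exact hb6 (Z ω, X ω))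
    have E1 : ∫ ω, (g (Z ω, X ω) * (S n).indicator (fun _ => (1:ℝ)) (Z ω, X ω)) * Y ω ∂(P[|{ω | R ω = true}]) = ∫ ω, (g (Z ω, X ω) * (S n).indicator (fun _ => (1:ℝ)) (Z ω, X ω)) * (Hfun (X ω) * tau (Z ω) (X ω) + wfun (X ω)) ∂(P[|{ω | R ω = true}]) :=
      stmt14_key_swap hm _ (condIntble _ c1ne hYint) hout
        (hvm (hg.mul (hImeas n))) (n:ℝ) (fun ω => hb1 (Z ω, X ω))
    have E0 : ∫ ω, ((g (Z ω, X ω) * ((pi (Z ω) (X ω) / (1 - pi (Z ω) (X ω))) * Hfun (X ω))) * (S n).indicator (fun _ => (1:ℝ)) (Z ω, X ω)) * (if D ω then (1:ℝ) else 0) ∂(P[|{ω | R ω = false}])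
        = ∫ ω, ((g (Z ω, X ω) * ((pi (Z ω) (X ω) / (1 - pi (Z ω) (X ω))) * Hfun (X ω))) * (S n).indicator (fun _ => (1:ℝ)) (Z ω, X ω)) * tau (Z ω) (X ω) ∂(P[|{ω | R ω = false}]) :=
      stmt14_key_swap hm _ (condIntble _ c0ne hiDint) hpse.symm
        (hvm ((hg.mul (hrp.mul hH2)).mul (hImeas n))) ((n:ℝ) * n)
        (fun ω => hb3 (Z ω, X ω))
    have E2 : ∫ ω, ((g (Z ω, X ω) * ((Hfun (X ω) * tau (Z ω) (X ω) + wfun (X ω)) - (Hfun (X ω) * taubar (Z ω) (X ω) + wfun (X ω)))) * (S n).indicator (fun _ => (1:ℝ)) (Z ω, X ω)) * (if R ω then (1:ℝ) else 0) ∂P = ∫ ω, ((g (Z ω, X ω) * ((Hfun (X ω) * tau (Z ω) (X ω) + wfun (X ω)) - (Hfun (X ω) * taubar (Z ω) (X ω) + wfun (X ω)))) * (S n).indicator (fun _ => (1:ℝ)) (Z ω, X ω)) * pi (Z ω) (X ω) ∂P :=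
      stmt14_key_swap hm P hiRint hpi_ver.symm
        (hvm ((hg.mul hABm).mul (hImeas n))) ((n:ℝ) * ((n:ℝ) + (n:ℝ)))
        (fun ω => hb5 (Z ω, X ω))
    have E3 : ∫ ω, ((g (Z ω, X ω) * ((pi (Z ω) (X ω) / (1 - pi (Z ω) (X ω))) * ((Hfun (X ω) * tau (Z ω) (X ω) + wfun (X ω)) - (Hfun (X ω) * taubar (Z ω) (X ω) + wfun (X ω))))) * (S n).indicator (fun _ => (1:ℝ)) (Z ω, X ω)) * (if R ω then (1:ℝ) else 0) ∂P = ∫ ω, ((g (Z ω, X ω) * ((pi (Z ω) (X ω) / (1 - pi (Z ω) (X ω))) * ((Hfun (X ω) * tau (Z ω) (X ω) + wfun (X ω)) - (Hfun (X ω) * taubar (Z ω) (X ω) + wfun (X ω))))) * (S n).indicator (fun _ => (1:ℝ)) (Z ω, X ω)) * pi (Z ω) (X ω) ∂P :=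
      stmt14_key_swap hm P hiRint hpi_ver.symm
        (hvm ((hg.mul (hrp.mul hABm)).mul (hImeas n))) ((n:ℝ) * ((n:ℝ) + (n:ℝ)))
        (fun ω => hb6 (Z ω, X ω))
    have hT1 : ∫ ω, (if R ω then (1:ℝ) else 0) * ((g (Z ω, X ω) * (S n).indicator (fun _ => (1:ℝ)) (Z ω, X ω)) * Y ω) ∂P = ∫ ω, (if R ω then (1:ℝ) else 0) * ((g (Z ω, X ω) * (Hfun (X ω) * tau (Z ω) (X ω) + wfun (X ω))) * (S n).indicator (fun _ => (1:ℝ)) (Z ω, X ω)) ∂P := by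
      calc ∫ ω, (if R ω then (1:ℝ) else 0) * ((g (Z ω, X ω) * (S n).indicator (fun _ => (1:ℝ)) (Z ω, X ω)) * Y ω) ∂P = (P {ω | R ω = true}).toReal * ∫ ω, (g (Z ω, X ω) * (S n).indicator (fun _ => (1:ℝ)) (Z ω, X ω)) * Y ω ∂(P[|{ω | R ω = true}]) := ind1 _
        _ = (P {ω | R ω = true}).toReal * ∫ ω, (g (Z ω, X ω) * (S n).indicator (fun _ => (1:ℝ)) (Z ω, X ω)) * (Hfun (X ω) * tau (Z ω) (X ω) + wfun (X ω)) ∂(P[|{ω | R ω = true}]) := by rw [E1]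
        _ = ∫ ω, (if R ω then (1:ℝ) else 0) * ((g (Z ω, X ω) * (S n).indicator (fun _ => (1:ℝ)) (Z ω, X ω)) * (Hfun (X ω) * tau (Z ω) (X ω) + wfun (X ω))) ∂P := (ind1 _).symm
        _ = ∫ ω, (if R ω then (1:ℝ) else 0) * ((g (Z ω, X ω) * (Hfun (X ω) * tau (Z ω) (X ω) + wfun (X ω))) * (S n).indicator (fun _ => (1:ℝ)) (Z ω, X ω)) ∂P := integral_congr_ae (Eventually.of_forall fun ω => by ring)
    have hT3 : ∫ ω, (if R ω then (0:ℝ) else 1) * (((g (Z ω, X ω) * ((pi (Z ω) (X ω) / (1 - pi (Z ω) (X ω))) * Hfun (X ω))) * (S n).indicator (fun _ => (1:ℝ)) (Z ω, X ω)) * (if D ω then (1:ℝ) else 0)) ∂P = ∫ ω, (if R ω then (0:ℝ) else 1) * ((g (Z ω, X ω) * ((pi (Z ω) (X ω) / (1 - pi (Z ω) (X ω))) * Hfun (X ω) * tau (Z ω) (X ω))) * (S n).indicator (fun _ => (1:ℝ)) (Z ω, X ω)) ∂P := by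
      calc ∫ ω, (if R ω then (0:ℝ) else 1) * (((g (Z ω, X ω) * ((pi (Z ω) (X ω) / (1 - pi (Z ω) (X ω))) * Hfun (X ω))) * (S n).indicator (fun _ => (1:ℝ)) (Z ω, X ω)) * (if D ω then (1:ℝ) else 0)) ∂P
          = (P {ω | R ω = false}).toReal * ∫ ω, ((g (Z ω, X ω) * ((pi (Z ω) (X ω) / (1 - pi (Z ω) (X ω))) * Hfun (X ω))) * (S n).indicator (fun _ => (1:ℝ)) (Z ω, X ω)) * (if D ω then (1:ℝ) else 0) ∂(P[|{ω | R ω = false}]) := ind0 _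
        _ = (P {ω | R ω = false}).toReal * ∫ ω, ((g (Z ω, X ω) * ((pi (Z ω) (X ω) / (1 - pi (Z ω) (X ω))) * Hfun (X ω))) * (S n).indicator (fun _ => (1:ℝ)) (Z ω, X ω)) * tau (Z ω) (X ω) ∂(P[|{ω | R ω = false}]) := by rw [E0]
        _ = ∫ ω, (if R ω then (0:ℝ) else 1) * (((g (Z ω, X ω) * ((pi (Z ω) (X ω) / (1 - pi (Z ω) (X ω))) * Hfun (X ω))) * (S n).indicator (fun _ => (1:ℝ)) (Z ω, X ω)) * tau (Z ω) (X ω)) ∂P := (ind0 _).symm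
        _ = ∫ ω, (if R ω then (0:ℝ) else 1) * ((g (Z ω, X ω) * ((pi (Z ω) (X ω) / (1 - pi (Z ω) (X ω))) * Hfun (X ω) * tau (Z ω) (X ω))) * (S n).indicator (fun _ => (1:ℝ)) (Z ω, X ω)) ∂P := integral_congr_ae (Eventually.of_forall fun ω => by ring)
    calc ∫ ω, ((if R ω then (1:ℝ) else 0) * (Y ω - Hfun (X ω) * taubar (Z ω) (X ω) - wfun (X ω)) - (if R ω then (0:ℝ) else 1) * (pi (Z ω) (X ω) / (1 - pi (Z ω) (X ω))) * Hfun (X ω) * ((if D ω then (1:ℝ) else 0) - taubar (Z ω) (X ω))) * (g (Z ω, X ω) * (S n).indicator (fun _ => (1:ℝ)) (Z ω, X ω)) ∂P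
        = ∫ ω, ((if R ω then (1:ℝ) else 0) * ((g (Z ω, X ω) * (S n).indicator (fun _ => (1:ℝ)) (Z ω, X ω)) * Y ω) - (if R ω then (1:ℝ) else 0) * ((g (Z ω, X ω) * (Hfun (X ω) * taubar (Z ω) (X ω) + wfun (X ω))) * (S n).indicator (fun _ => (1:ℝ)) (Z ω, X ω))) - ((if R ω then (0:ℝ) else 1) * (((g (Z ω, X ω) * ((pi (Z ω) (X ω) / (1 - pi (Z ω) (X ω))) * Hfun (X ω))) * (S n).indicator (fun _ => (1:ℝ)) (Z ω, X ω)) * (if D ω then (1:ℝ) else 0)) - (if R ω then (0:ℝ) else 1) * ((g (Z ω, X ω) * ((pi (Z ω) (X ω) / (1 - pi (Z ω) (X ω))) * Hfun (X ω) * taubar (Z ω) (X ω))) * (S n).indicator (fun _ => (1:ℝ)) (Z ω, X ω))) ∂P :=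
          integral_congr_ae (Eventually.of_forall fun ω => by ring)
      _ = ((∫ ω, (if R ω then (1:ℝ) else 0) * ((g (Z ω, X ω) * (S n).indicator (fun _ => (1:ℝ)) (Z ω, X ω)) * Y ω) ∂P) - ∫ ω, (if R ω then (1:ℝ) else 0) * ((g (Z ω, X ω) * (Hfun (X ω) * taubar (Z ω) (X ω) + wfun (X ω))) * (S n).indicator (fun _ => (1:ℝ)) (Z ω, X ω)) ∂P) - ((∫ ω, (if R ω then (0:ℝ) else 1) * (((g (Z ω, X ω) * ((pi (Z ω) (X ω) / (1 - pi (Z ω) (X ω))) * Hfun (X ω))) * (S n).indicator (fun _ => (1:ℝ)) (Z ω, X ω)) * (if D ω then (1:ℝ) else 0)) ∂P) - ∫ ω, (if R ω then (0:ℝ) else 1) * ((g (Z ω, X ω) * ((pi (Z ω) (X ω) / (1 - pi (Z ω) (X ω))) * Hfun (X ω) * taubar (Z ω) (X ω))) * (S n).indicator (fun _ => (1:ℝ)) (Z ω, X ω)) ∂P) := by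
          have h12 : Integrable (fun ω => ((if R ω then (1:ℝ) else 0) * ((g (Z ω, X ω) * (S n).indicator (fun _ => (1:ℝ)) (Z ω, X ω)) * Y ω)) - ((if R ω then (1:ℝ) else 0) * ((g (Z ω, X ω) * (Hfun (X ω) * taubar (Z ω) (X ω) + wfun (X ω))) * (S n).indicator (fun _ => (1:ℝ)) (Z ω, X ω)))) P := iT1.sub iT2
          have h34 : Integrable (fun ω => ((if R ω then (0:ℝ) else 1) * (((g (Z ω, X ω) * ((pi (Z ω) (X ω) / (1 - pi (Z ω) (X ω))) * Hfun (X ω))) * (S n).indicator (fun _ => (1:ℝ)) (Z ω, X ω)) * (if D ω then (1:ℝ) else 0))) - ((if R ω then (0:ℝ) else 1) * ((g (Z ω, X ω) * ((pi (Z ω) (X ω) / (1 - pi (Z ω) (X ω))) * Hfun (X ω) * taubar (Z ω) (X ω))) * (S n).indicator (fun _ => (1:ℝ)) (Z ω, X ω)))) P := iT3.sub iT4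
          rw [integral_sub h12 h34, integral_sub iT1 iT2, integral_sub iT3 iT4]
      _ = ((∫ ω, (if R ω then (1:ℝ) else 0) * ((g (Z ω, X ω) * (Hfun (X ω) * tau (Z ω) (X ω) + wfun (X ω))) * (S n).indicator (fun _ => (1:ℝ)) (Z ω, X ω)) ∂P) - ∫ ω, (if R ω then (1:ℝ) else 0) * ((g (Z ω, X ω) * (Hfun (X ω) * taubar (Z ω) (X ω) + wfun (X ω))) * (S n).indicator (fun _ => (1:ℝ)) (Z ω, X ω)) ∂P) - ((∫ ω, (if R ω then (0:ℝ) else 1) * ((g (Z ω, X ω) * ((pi (Z ω) (X ω) / (1 - pi (Z ω) (X ω))) * Hfun (X ω) * tau (Z ω) (X ω))) * (S n).indicator (fun _ => (1:ℝ)) (Z ω, X ω)) ∂P) - ∫ ω, (if R ω then (0:ℝ) else 1) * ((g (Z ω, X ω) * ((pi (Z ω) (X ω) / (1 - pi (Z ω) (X ω))) * Hfun (X ω) * taubar (Z ω) (X ω))) * (S n).indicator (fun _ => (1:ℝ)) (Z ω, X ω)) ∂P) := by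
          rw [hT1, hT3]
      _ = (∫ ω, ((if R ω then (1:ℝ) else 0) * ((g (Z ω, X ω) * (Hfun (X ω) * tau (Z ω) (X ω) + wfun (X ω))) * (S n).indicator (fun _ => (1:ℝ)) (Z ω, X ω))) - ((if R ω then (1:ℝ) else 0) * ((g (Z ω, X ω) * (Hfun (X ω) * taubar (Z ω) (X ω) + wfun (X ω))) * (S n).indicator (fun _ => (1:ℝ)) (Z ω, X ω))) ∂P) - ∫ ω, ((if R ω then (0:ℝ) else 1) * ((g (Z ω, X ω) * ((pi (Z ω) (X ω) / (1 - pi (Z ω) (X ω))) * Hfun (X ω) * tau (Z ω) (X ω))) * (S n).indicator (fun _ => (1:ℝ)) (Z ω, X ω))) - ((if R ω then (0:ℝ) else 1) * ((g (Z ω, X ω) * ((pi (Z ω) (X ω) / (1 - pi (Z ω) (X ω))) * Hfun (X ω) * taubar (Z ω) (X ω))) * (S n).indicator (fun _ => (1:ℝ)) (Z ω, X ω))) ∂P := by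
          rw [integral_sub iTA iT2, integral_sub iTF iT4]
      _ = (∫ ω, ((g (Z ω, X ω) * ((Hfun (X ω) * tau (Z ω) (X ω) + wfun (X ω)) - (Hfun (X ω) * taubar (Z ω) (X ω) + wfun (X ω)))) * (S n).indicator (fun _ => (1:ℝ)) (Z ω, X ω)) * (if R ω then (1:ℝ) else 0) ∂P) - ∫ ω, (if R ω then (0:ℝ) else 1) * ((g (Z ω, X ω) * ((pi (Z ω) (X ω) / (1 - pi (Z ω) (X ω))) * ((Hfun (X ω) * tau (Z ω) (X ω) + wfun (X ω)) - (Hfun (X ω) * taubar (Z ω) (X ω) + wfun (X ω))))) * (S n).indicator (fun _ => (1:ℝ)) (Z ω, X ω)) ∂P := by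
          have e1 : (fun ω => ((if R ω then (1:ℝ) else 0) * ((g (Z ω, X ω) * (Hfun (X ω) * tau (Z ω) (X ω) + wfun (X ω))) * (S n).indicator (fun _ => (1:ℝ)) (Z ω, X ω))) - ((if R ω then (1:ℝ) else 0) * ((g (Z ω, X ω) * (Hfun (X ω) * taubar (Z ω) (X ω) + wfun (X ω))) * (S n).indicator (fun _ => (1:ℝ)) (Z ω, X ω)))) =ᵐ[P] (fun ω => ((g (Z ω, X ω) * ((Hfun (X ω) * tau (Z ω) (X ω) + wfun (X ω)) - (Hfun (X ω) * taubar (Z ω) (X ω) + wfun (X ω)))) * (S n).indicator (fun _ => (1:ℝ)) (Z ω, X ω)) * (if R ω then (1:ℝ) else 0)) :=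
            Eventually.of_forall fun ω => by ring
          have e2 : (fun ω => ((if R ω then (0:ℝ) else 1) * ((g (Z ω, X ω) * ((pi (Z ω) (X ω) / (1 - pi (Z ω) (X ω))) * Hfun (X ω) * tau (Z ω) (X ω))) * (S n).indicator (fun _ => (1:ℝ)) (Z ω, X ω))) - ((if R ω then (0:ℝ) else 1) * ((g (Z ω, X ω) * ((pi (Z ω) (X ω) / (1 - pi (Z ω) (X ω))) * Hfun (X ω) * taubar (Z ω) (X ω))) * (S n).indicator (fun _ => (1:ℝ)) (Z ω, X ω)))) =ᵐ[P] (fun ω => (if R ω then (0:ℝ) else 1) * ((g (Z ω, X ω) * ((pi (Z ω) (X ω) / (1 - pi (Z ω) (X ω))) * ((Hfun (X ω) * tau (Z ω) (X ω) + wfun (X ω)) - (Hfun (X ω) * taubar (Z ω) (X ω) + wfun (X ω))))) * (S n).indicator (fun _ => (1:ℝ)) (Z ω, X ω))) :=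
            Eventually.of_forall fun ω => by ring
          rw [integral_congr_ae e1, integral_congr_ae e2]
      _ = (∫ ω, ((g (Z ω, X ω) * ((Hfun (X ω) * tau (Z ω) (X ω) + wfun (X ω)) - (Hfun (X ω) * taubar (Z ω) (X ω) + wfun (X ω)))) * (S n).indicator (fun _ => (1:ℝ)) (Z ω, X ω)) * pi (Z ω) (X ω) ∂P) - ∫ ω, ((g (Z ω, X ω) * ((pi (Z ω) (X ω) / (1 - pi (Z ω) (X ω))) * ((Hfun (X ω) * tau (Z ω) (X ω) + wfun (X ω)) - (Hfun (X ω) * taubar (Z ω) (X ω) + wfun (X ω))))) * (S n).indicator (fun _ => (1:ℝ)) (Z ω, X ω)) - ((g (Z ω, X ω) * ((pi (Z ω) (X ω) / (1 - pi (Z ω) (X ω))) * ((Hfun (X ω) * tau (Z ω) (X ω) + wfun (X ω)) - (Hfun (X ω) * taubar (Z ω) (X ω) + wfun (X ω))))) * (S n).indicator (fun _ => (1:ℝ)) (Z ω, X ω)) * (if R ω then (1:ℝ) else 0) ∂P := by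
          have e3 : (fun ω => (if R ω then (0:ℝ) else 1) * ((g (Z ω, X ω) * ((pi (Z ω) (X ω) / (1 - pi (Z ω) (X ω))) * ((Hfun (X ω) * tau (Z ω) (X ω) + wfun (X ω)) - (Hfun (X ω) * taubar (Z ω) (X ω) + wfun (X ω))))) * (S n).indicator (fun _ => (1:ℝ)) (Z ω, X ω))) =ᵐ[P] (fun ω => ((g (Z ω, X ω) * ((pi (Z ω) (X ω) / (1 - pi (Z ω) (X ω))) * ((Hfun (X ω) * tau (Z ω) (X ω) + wfun (X ω)) - (Hfun (X ω) * taubar (Z ω) (X ω) + wfun (X ω))))) * (S n).indicator (fun _ => (1:ℝ)) (Z ω, X ω)) - ((g (Z ω, X ω) * ((pi (Z ω) (X ω) / (1 - pi (Z ω) (X ω))) * ((Hfun (X ω) * tau (Z ω) (X ω) + wfun (X ω)) - (Hfun (X ω) * taubar (Z ω) (X ω) + wfun (X ω))))) * (S n).indicator (fun _ => (1:ℝ)) (Z ω, X ω)) * (if R ω then (1:ℝ) else 0)) :=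
            Eventually.of_forall fun ω => by by_cases h : R ω <;> simp [h]
          rw [E2, integral_congr_ae e3]
      _ = (∫ ω, ((g (Z ω, X ω) * ((Hfun (X ω) * tau (Z ω) (X ω) + wfun (X ω)) - (Hfun (X ω) * taubar (Z ω) (X ω) + wfun (X ω)))) * (S n).indicator (fun _ => (1:ℝ)) (Z ω, X ω)) * pi (Z ω) (X ω) ∂P) - ((∫ ω, (g (Z ω, X ω) * ((pi (Z ω) (X ω) / (1 - pi (Z ω) (X ω))) * ((Hfun (X ω) * tau (Z ω) (X ω) + wfun (X ω)) - (Hfun (X ω) * taubar (Z ω) (X ω) + wfun (X ω))))) * (S n).indicator (fun _ => (1:ℝ)) (Z ω, X ω) ∂P) - ∫ ω, ((g (Z ω, X ω) * ((pi (Z ω) (X ω) / (1 - pi (Z ω) (X ω))) * ((Hfun (X ω) * tau (Z ω) (X ω) + wfun (X ω)) - (Hfun (X ω) * taubar (Z ω) (X ω) + wfun (X ω))))) * (S n).indicator (fun _ => (1:ℝ)) (Z ω, X ω)) * (if R ω then (1:ℝ) else 0) ∂P) := by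
          rw [integral_sub iv2 iv2R]
      _ = (∫ ω, ((g (Z ω, X ω) * ((Hfun (X ω) * tau (Z ω) (X ω) + wfun (X ω)) - (Hfun (X ω) * taubar (Z ω) (X ω) + wfun (X ω)))) * (S n).indicator (fun _ => (1:ℝ)) (Z ω, X ω)) * pi (Z ω) (X ω) ∂P) - ((∫ ω, (g (Z ω, X ω) * ((pi (Z ω) (X ω) / (1 - pi (Z ω) (X ω))) * ((Hfun (X ω) * tau (Z ω) (X ω) + wfun (X ω)) - (Hfun (X ω) * taubar (Z ω) (X ω) + wfun (X ω))))) * (S n).indicator (fun _ => (1:ℝ)) (Z ω, X ω) ∂P) - ∫ ω, ((g (Z ω, X ω) * ((pi (Z ω) (X ω) / (1 - pi (Z ω) (X ω))) * ((Hfun (X ω) * tau (Z ω) (X ω) + wfun (X ω)) - (Hfun (X ω) * taubar (Z ω) (X ω) + wfun (X ω))))) * (S n).indicator (fun _ => (1:ℝ)) (Z ω, X ω)) * pi (Z ω) (X ω) ∂P) := by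
          rw [E3]
      _ = ∫ ω, ((g (Z ω, X ω) * ((Hfun (X ω) * tau (Z ω) (X ω) + wfun (X ω)) - (Hfun (X ω) * taubar (Z ω) (X ω) + wfun (X ω)))) * (S n).indicator (fun _ => (1:ℝ)) (Z ω, X ω)) * pi (Z ω) (X ω) - (((g (Z ω, X ω) * ((pi (Z ω) (X ω) / (1 - pi (Z ω) (X ω))) * ((Hfun (X ω) * tau (Z ω) (X ω) + wfun (X ω)) - (Hfun (X ω) * taubar (Z ω) (X ω) + wfun (X ω))))) * (S n).indicator (fun _ => (1:ℝ)) (Z ω, X ω)) - ((g (Z ω, X ω) * ((pi (Z ω) (X ω) / (1 - pi (Z ω) (X ω))) * ((Hfun (X ω) * tau (Z ω) (X ω) + wfun (X ω)) - (Hfun (X ω) * taubar (Z ω) (X ω) + wfun (X ω))))) * (S n).indicator (fun _ => (1:ℝ)) (Z ω, X ω)) * pi (Z ω) (X ω)) ∂P := by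
          have hsub : Integrable (fun ω => ((g (Z ω, X ω) * ((pi (Z ω) (X ω) / (1 - pi (Z ω) (X ω))) * ((Hfun (X ω) * tau (Z ω) (X ω) + wfun (X ω)) - (Hfun (X ω) * taubar (Z ω) (X ω) + wfun (X ω))))) * (S n).indicator (fun _ => (1:ℝ)) (Z ω, X ω)) - ((g (Z ω, X ω) * ((pi (Z ω) (X ω) / (1 - pi (Z ω) (X ω))) * ((Hfun (X ω) * tau (Z ω) (X ω) + wfun (X ω)) - (Hfun (X ω) * taubar (Z ω) (X ω) + wfun (X ω))))) * (S n).indicator (fun _ => (1:ℝ)) (Z ω, X ω)) * pi (Z ω) (X ω)) P := iv2.sub iv2pi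
          rw [integral_sub iv1pi hsub, integral_sub iv2 iv2pi]
      _ = 0 := by
          have hzero : (fun ω => ((g (Z ω, X ω) * ((Hfun (X ω) * tau (Z ω) (X ω) + wfun (X ω)) - (Hfun (X ω) * taubar (Z ω) (X ω) + wfun (X ω)))) * (S n).indicator (fun _ => (1:ℝ)) (Z ω, X ω)) * pi (Z ω) (X ω) - (((g (Z ω, X ω) * ((pi (Z ω) (X ω) / (1 - pi (Z ω) (X ω))) * ((Hfun (X ω) * tau (Z ω) (X ω) + wfun (X ω)) - (Hfun (X ω) * taubar (Z ω) (X ω) + wfun (X ω))))) * (S n).indicator (fun _ => (1:ℝ)) (Z ω, X ω)) - ((g (Z ω, X ω) * ((pi (Z ω) (X ω) / (1 - pi (Z ω) (X ω))) * ((Hfun (X ω) * tau (Z ω) (X ω) + wfun (X ω)) - (Hfun (X ω) * taubar (Z ω) (X ω) + wfun (X ω))))) * (S n).indicator (fun _ => (1:ℝ)) (Z ω, X ω)) * pi (Z ω) (X ω)))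
              =ᵐ[P] fun _ => (0:ℝ) := by
            filter_upwards [hpi_pos] with ω hω
            obtain ⟨hp0, hp1⟩ := hω
            have hne : (1:ℝ) - pi (Z ω) (X ω) ≠ 0 := (sub_pos.mpr hp1).ne'
            field_simp
            ring
          rw [integral_congr_ae hzero]
          simp
  have step1 : Tendsto (fun n : ℕ => ∫ ω, ((if R ω then (1:ℝ) else 0) * (Y ω - Hfun (X ω) * taubar (Z ω) (X ω) - wfun (X ω)) - (if R ω then (0:ℝ) else 1) * (pi (Z ω) (X ω) / (1 - pi (Z ω) (X ω))) * Hfun (X ω) * ((if D ω then (1:ℝ) else 0) - taubar (Z ω) (X ω))) * (g (Z ω, X ω) * (S n).indicator (fun _ => (1:ℝ)) (Z ω, X ω)) ∂P) atTop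
      (𝓝 (∫ ω, ((if R ω then (1:ℝ) else 0) * (Y ω - Hfun (X ω) * taubar (Z ω) (X ω) - wfun (X ω)) - (if R ω then (0:ℝ) else 1) * (pi (Z ω) (X ω) / (1 - pi (Z ω) (X ω))) * Hfun (X ω) * ((if D ω then (1:ℝ) else 0) - taubar (Z ω) (X ω))) * g (Z ω, X ω) ∂P)) := by
    refine tendsto_integral_of_dominated_convergence (fun ω => ‖((if R ω then (1:ℝ) else 0) * (Y ω - Hfun (X ω) * taubar (Z ω) (X ω) - wfun (X ω)) - (if R ω then (0:ℝ) else 1) * (pi (Z ω) (X ω) / (1 - pi (Z ω) (X ω))) * Hfun (X ω) * ((if D ω then (1:ℝ) else 0) - taubar (Z ω) (X ω))) * g (Z ω, X ω)‖)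
      (fun n => (hfmeas.mul (hgW.mul ((hImeas n).comp hWmeas))).aestronglyMeasurable)
      hfg.norm (fun n => Eventually.of_forall fun ω => ?_) (Eventually.of_forall fun ω => ?_)
    · by_cases hp : (Z ω, X ω) ∈ S n
      · simp [Set.indicator_of_mem hp]
      · simp only [Set.indicator_of_notMem hp, mul_zero, norm_zero]
        positivity
    · obtain ⟨N, hN⟩ := exists_nat_ge (Mx (Z ω, X ω))
      refine Tendsto.congr' ?_ tendsto_const_nhds
      filter_upwards [eventually_ge_atTop N] with n hn
      have hp : (Z ω, X ω) ∈ S n := by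
        simp only [hS_def, Set.mem_setOf_eq]
        exact hN.trans (Nat.cast_le.mpr hn)
      simp [Set.indicator_of_mem hp]
  have hzero : Tendsto (fun n : ℕ => ∫ ω, ((if R ω then (1:ℝ) else 0) * (Y ω - Hfun (X ω) * taubar (Z ω) (X ω) - wfun (X ω)) - (if R ω then (0:ℝ) else 1) * (pi (Z ω) (X ω) / (1 - pi (Z ω) (X ω))) * Hfun (X ω) * ((if D ω then (1:ℝ) else 0) - taubar (Z ω) (X ω))) * (g (Z ω, X ω) * (S n).indicator (fun _ => (1:ℝ)) (Z ω, X ω)) ∂P) atTop (𝓝 0) := by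
    simp only [step2]
    exact tendsto_const_nhds
  exact tendsto_nhds_unique step1 hzero
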